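/- Define s(g,s) := 6 + (8g³s − 32g³ − 19g²s + 66g² + 6gs − 16g + 3s + 6) / ((g−1)(g+1)(g²s − 2gs − 4g² + 7g + 3)). Then for each integer g ≥ 18 there exists a rational s ≥ 11 such that 8·s(g,s)/(12 − s(g,s)) + (6 + 12/(g+1))·(16 − 2·s(g,s))/(12 − s(g,s)) < 13. -/

import Mathlib

/-- The slope of the pullback `φ*(A)` of an ample class of slope `s`. -/
noncomputable def pullbackSlope (g : ℕ) (s : ℚ) : ℚ :=
  6 + (8 * (g : ℚ) ^ 3 * s - 32 * (g : ℚ) ^ 3 - 19 * (g : ℚ) ^ 2 * s + 66 * (g : ℚ) ^ 2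
        + 6 * (g : ℚ) * s - 16 * (g : ℚ) + 3 * s + 6) /
      (((g : ℚ) - 1) * ((g : ℚ) + 1) * ((g : ℚ) ^ 2 * s - 2 * (g : ℚ) * s
        - 4 * (g : ℚ) ^ 2 + 7 * (g : ℚ) + 3))

/-- For each integer `g ≥ 18` there is a rational `s ≥ 11` with
`8·s(g,s)/(12 − s(g,s)) + (6 + 12/(g+1))·(16 − 2·s(g,s))/(12 − s(g,s)) < 13`. -/
theorem even_genus_general_type_condition (g : ℕ) (hg : 18 ≤ g) :
    ∃ s : ℚ, 11 ≤ s ∧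
      8 * pullbackSlope g s / (12 - pullbackSlope g s)
        + (6 + 12 / ((g : ℚ) + 1)) * (16 - 2 * pullbackSlope g s) / (12 - pullbackSlope g s)
        < 13 := by
  refine ⟨11, le_refl _, ?_⟩
  have hq : (18 : ℚ) ≤ (g : ℚ) := by exact_mod_cast hg
  set q : ℚ := (g : ℚ) with hqdef
  have hx : (0 : ℚ) ≤ q - 18 := by linarith
  have h3 : (0:ℚ) < 7 * q ^ 2 - 15 * q + 3 := by nlinarith
  have hDen : 0 < (q - 1) * (q + 1) * (7 * q ^ 2 - 15 * q + 3) :=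
    mul_pos (mul_pos (by linarith) (by linarith)) h3
  have hp : pullbackSlope g 11
      = 6 + (56 * q ^ 3 - 143 * q ^ 2 + 50 * q + 39) /
          ((q - 1) * (q + 1) * (7 * q ^ 2 - 15 * q + 3)) := by
    unfold pullbackSlope
    rw [show (8 * q ^ 3 * 11 - 32 * q ^ 3 - 19 * q ^ 2 * 11 + 66 * q ^ 2
        + 6 * q * 11 - 16 * q + 3 * 11 + 6)
        = 56 * q ^ 3 - 143 * q ^ 2 + 50 * q + 39 from by ring,
      show ((q - 1) * (q + 1) * (q ^ 2 * 11 - 2 * q * 11 - 4 * q ^ 2 + 7 * q + 3))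
        = (q - 1) * (q + 1) * (7 * q ^ 2 - 15 * q + 3) from by ring]
  have hNlt : (56 * q ^ 3 - 143 * q ^ 2 + 50 * q + 39)
      < 6 * ((q - 1) * (q + 1) * (7 * q ^ 2 - 15 * q + 3)) := by nlinarith
  have h12 : 0 < 12 - pullbackSlope g 11 := by
    rw [hp]
    have : (56 * q ^ 3 - 143 * q ^ 2 + 50 * q + 39) /
        ((q - 1) * (q + 1) * (7 * q ^ 2 - 15 * q + 3)) < 6 :=
      (div_lt_iff₀ hDen).mpr (by linarith)
    linarith
  have hq1 : (0 : ℚ) < q + 1 := by linarith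
  rw [← add_div, div_lt_iff₀ h12, hp]
  have hkey : 0 < 42 * q ^ 5 - 888 * q ^ 4 + 2733 * q ^ 3 - 2337 * q ^ 2 - 249 * q + 711 := by
    nlinarith [mul_nonneg hx hx, mul_nonneg (mul_nonneg hx hx) hx,
      mul_nonneg (mul_nonneg (mul_nonneg hx hx) hx) hx,
      mul_nonneg (mul_nonneg (mul_nonneg (mul_nonneg hx hx) hx) hx) hx]
  have hE : 0 < (q - 1) * (q * (q * 7 - 15) + 3) := mul_pos (by linarith) (by nlinarith)
  have hA : q - 1 ≠ 0 := by linarith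
  have hB : q * (q * 7 - 15) + 3 ≠ 0 := by nlinarith
  field_simp [hDen.ne', hq1.ne', hA, hB]
  rw [div_lt_div_iff_of_pos_right hE]
  nlinarith [hkey, mul_pos hq1 hDen, mul_pos hkey (mul_pos hq1 hDen), mul_pos hkey hDen,
    mul_pos hkey (mul_pos hDen hDen), mul_pos hkey (mul_pos hq1 (mul_pos hDen hDen))]
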